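/- Let Q be a symmetric n×n real matrix, d ∈ ℝⁿ, A ∈ ℝ^{m×n}, b ∈ ℝᵐ, with F = {x : Ax ≤ b} bounded. For I ⊆ {1,…,m} let Φ*_I := inf{Φ(x) : x ∈ F, a_iᵀx = b_i for all i ∈ I}. Then there is NO sequence (x_k)_{k≥0} of points of F such that for every k ≥ 0: Φ(x_{k+1}) ≤ Φ(x_k), and either (i) pᵀQp > 0 for all nonzero p with a_iᵀp = 0 for all i ∈ I_{x_k}, and Φ(x_{k+1}) < Φ*_{I_{x_k}}, or (ii) there exists a nonzero p with a_iᵀp = 0 for all i ∈ I_{x_k} and pᵀQp ≤ 0, and I_{x_k} is a proper subset of I_{x_{k+1}}. (This is the finite-termination theorem for the finite-terminating generalized mountain climbing algorithm.) -/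
import Mathlib


open Matrix

/-- The objective `Φ(x) = xᵀQx + 2dᵀx`. -/
noncomputable def Phi {n : ℕ} (Q : Matrix (Fin n) (Fin n) ℝ) (d : Fin n → ℝ)
    (x : Fin n → ℝ) : ℝ :=
  x ⬝ᵥ (Q *ᵥ x) + 2 * (d ⬝ᵥ x)

/-- `Φ*_I` : the infimum of `Φ` over the feasible points whose active set contains
the active set of `x̂`, i.e. over `{x ∈ F : a_iᵀx = b_i ∀ i ∈ I_x̂}`. -/
noncomputable def PhiStar {n m : ℕ} (Q : Matrix (Fin n) (Fin n) ℝ) (d : Fin n → ℝ)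
    (A : Matrix (Fin m) (Fin n) ℝ) (b : Fin m → ℝ) (xhat : Fin n → ℝ) : ℝ :=
  sInf {v : ℝ | ∃ y : Fin n → ℝ, A *ᵥ y ≤ b ∧
    (∀ i : Fin m, (A *ᵥ xhat) i = b i → (A *ᵥ y) i = b i) ∧ v = Phi Q d y}

/-- Theorem `thm:gmcfinite`, finite termination of the
finite-terminating GMC algorithm. With `F = {x : Ax ≤ b}` bounded, there is no
infinite sequence of feasible points with nonincreasing objective values in which
every step is either
(i) a step at a point where `Q` is positive definite on the null space of the
active constraints and whose successor has objective value strictly below `Φ*` of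
the current active set, or
(ii) a step at a point where `Q` is not positive definite on that null space and
whose successor has a strictly larger active set. -/
theorem gmc_finite_termination {n m : ℕ}
    (Q : Matrix (Fin n) (Fin n) ℝ) (hQ : Q.IsSymm)
    (d : Fin n → ℝ) (A : Matrix (Fin m) (Fin n) ℝ) (b : Fin m → ℝ)
    (hbdd : Bornology.IsBounded {x : Fin n → ℝ | A *ᵥ x ≤ b}) :
    ¬ ∃ x : ℕ → Fin n → ℝ,
      (∀ k, A *ᵥ x k ≤ b) ∧
      (∀ k, Phi Q d (x (k + 1)) ≤ Phi Q d (x k)) ∧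
      (∀ k,
        ((∀ p : Fin n → ℝ, p ≠ 0 →
            (∀ i : Fin m, (A *ᵥ x k) i = b i → (A *ᵥ p) i = 0) →
            0 < p ⬝ᵥ (Q *ᵥ p)) ∧
          Phi Q d (x (k + 1)) < PhiStar Q d A b (x k)) ∨
        ((∃ p : Fin n → ℝ, p ≠ 0 ∧
            (∀ i : Fin m, (A *ᵥ x k) i = b i → (A *ᵥ p) i = 0) ∧
            p ⬝ᵥ (Q *ᵥ p) ≤ 0) ∧
          {i : Fin m | (A *ᵥ x k) i = b i} ⊂
            {i : Fin m | (A *ᵥ x (k + 1)) i = b i})) := by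
  rintro ⟨x, hfeas, hmono, hstep⟩
  have hanti : Antitone fun k => Phi Q d (x k) := antitone_nat_of_succ_le hmono
  -- F is compact
  have hF_closed : IsClosed {y : Fin n → ℝ | A *ᵥ y ≤ b} := by
    have : {y : Fin n → ℝ | A *ᵥ y ≤ b} = ⋂ i, {y | (A *ᵥ y) i ≤ b i} := by
      exact Set.ext fun y => ⟨fun h => Set.mem_iInter.mpr fun i => h i,
        fun h i => Set.mem_iInter.mp h i⟩
    rw [this]
    refine isClosed_iInter fun i => isClosed_le ?_ continuous_const
    have : (fun y : Fin n → ℝ => (A *ᵥ y) i) = fun y => ∑ j, A i j * y j := by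
      funext y; simp [mulVec, dotProduct]
    rw [this]; fun_prop
  have hF_compact : IsCompact {y : Fin n → ℝ | A *ᵥ y ≤ b} :=
    Metric.isCompact_of_isClosed_isBounded hF_closed hbdd
  have hPhi_cont : Continuous (Phi Q d) := by
    have : Phi Q d = fun y => (∑ i, y i * ∑ j, Q i j * y j) + 2 * ∑ i, d i * y i := by
      funext y; simp [Phi, dotProduct, mulVec]
    rw [this]; fun_prop
  have hbdd_below : ∀ xhat : Fin n → ℝ, BddBelow {v : ℝ | ∃ y : Fin n → ℝ, A *ᵥ y ≤ b ∧
      (∀ i : Fin m, (A *ᵥ xhat) i = b i → (A *ᵥ y) i = b i) ∧ v = Phi Q d y} := by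
    intro xhat
    refine BddBelow.mono ?_ (hF_compact.bddBelow_image hPhi_cont.continuousOn)
    rintro v ⟨y, hy, -, rfl⟩
    exact ⟨y, hy, rfl⟩
  set S : ℕ → Set (Fin m) := fun k => {i | (A *ᵥ x k) i = b i} with hSdef
  set P : ℕ → Prop := fun k => Phi Q d (x (k + 1)) < PhiStar Q d A b (x k) with hPdef
  -- key lemma
  have key : ∀ k j, k < j → P k → ¬ (S k ⊆ S j) := by
    intro k j hkj hPk hsub
    have hmem : Phi Q d (x j) ∈ {v : ℝ | ∃ y : Fin n → ℝ, A *ᵥ y ≤ b ∧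
        (∀ i : Fin m, (A *ᵥ x k) i = b i → (A *ᵥ y) i = b i) ∧ v = Phi Q d y} :=
      ⟨x j, hfeas j, fun i hi => hsub hi, rfl⟩
    have h1 : PhiStar Q d A b (x k) ≤ Phi Q d (x j) := csInf_le (hbdd_below _) hmem
    have h2 : Phi Q d (x j) ≤ Phi Q d (x (k + 1)) := hanti hkj
    simp only [hPdef] at hPk
    linarith
  -- type (ii) when ¬ P k
  have hii : ∀ k, ¬ P k → S k ⊂ S (k + 1) := by
    intro k hk
    rcases hstep k with ⟨-, h⟩ | ⟨-, h⟩
    · exact absurd h hk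
    · exact h
  by_cases hfin : {k | P k}.Finite
  · -- eventually all steps type (ii): strictly increasing chain of subsets of Fin m
    obtain ⟨K, hK⟩ := hfin.bddAbove
    have hgmono : StrictMono fun j => S (K + 1 + j) := by
      refine strictMono_nat_of_lt_succ fun j => ?_
      have hnP : ¬ P (K + 1 + j) := fun h => by
        have := hK h; omega
      have := hii _ hnP
      rw [show K + 1 + j + 1 = K + 1 + (j + 1) from by ring] at this
      exact Set.lt_iff_ssubset.mpr this
    obtain ⟨a, c, hne, heq⟩ :=
      Finite.exists_ne_map_eq_of_infinite fun j : ℕ => S (K + 1 + j)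
    exact hne (hgmono.injective heq)
  · -- infinitely many type-(i) steps: two with equal active set, contradiction
    have : Infinite {k // P k} := Set.infinite_coe_iff.mpr hfin
    obtain ⟨a, c, hne, heq⟩ :=
      Finite.exists_ne_map_eq_of_infinite fun k : {k // P k} => S k.val
    rcases lt_trichotomy a.val c.val with h | h | h
    · exact key a.val c.val h a.prop (heq ▸ subset_rfl)
    · exact hne (Subtype.ext h)
    · exact key c.val a.val h c.prop (heq ▸ subset_rfl)
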